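/- Let A be an n×n real matrix, m ≥ 1, and S a nonempty subset of the index set. Then perm((A^{⊙m})|_S) ≥ m · perm(A|_S), where M|_S is the principal submatrix of M with rows and columns indexed by S, and perm is the tropical permanent (maximum over permutations of S of the sum of the corresponding entries). -/

import Mathlib

/-- The tropical (max-plus) product of two `n × n` real matrices:
`(A ⊙ B) i j = max_k (A i k + B k j)`. -/
noncomputable def tropMul {n : ℕ} [NeZero n] (A B : Fin n → Fin n → ℝ) :
    Fin n → Fin n → ℝ :=
  fun i j => Finset.univ.sup' Finset.univ_nonempty fun k => A i k + B k j

/-- The `m`-th tropical power `A^{⊙m}` of an `n × n` real matrix (meaningful for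
`m ≥ 1`; the value at `m = 0` is a junk value). -/
noncomputable def tropPow {n : ℕ} [NeZero n] (A : Fin n → Fin n → ℝ) :
    ℕ → Fin n → Fin n → ℝ
  | 0 => fun _ _ => 0
  | 1 => A
  | m + 2 => tropMul A (tropPow A (m + 1))

/-- The tropical permanent of the principal submatrix of `M` on the index set
`S`: the maximum over permutations `σ` of `S` of `∑_{i ∈ S} M i (σ i)`. -/
noncomputable def tropPermOn {n : ℕ} (M : Fin n → Fin n → ℝ) (S : Finset (Fin n)) : ℝ :=
  Finset.univ.sup' ⟨Equiv.refl {x // x ∈ S}, Finset.mem_univ _⟩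
    fun σ : Equiv.Perm {x // x ∈ S} => ∑ i : {x // x ∈ S}, M (i : Fin n) ((σ i : Fin n))

lemma tropPow_path_ge {n : ℕ} [NeZero n] (A : Fin n → Fin n → ℝ) {S : Finset (Fin n)}
    (σ : Equiv.Perm {x // x ∈ S}) :
    ∀ m, 1 ≤ m → ∀ i : {x // x ∈ S},
      tropPow A m (i : Fin n) (((σ ^ m) i : Fin n)) ≥
        ∑ k ∈ Finset.range m, A (((σ ^ k) i : Fin n)) (((σ ^ (k + 1)) i : Fin n))
  | 0, h => by omega
  | 1, _ => fun i => by simp [tropPow]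
  | (m + 2), _ => fun i => by
    have ih := tropPow_path_ge A σ (m + 1) (by omega) (σ i)
    have hpow : ∀ j : {x // x ∈ S}, ∀ k : ℕ, (σ ^ (k + 1)) j = (σ ^ k) (σ j) := by
      intro j k
      rw [pow_succ, Equiv.Perm.mul_apply]
    have h1 : tropPow A (m + 2) (i : Fin n) (((σ ^ (m + 2)) i : Fin n)) ≥
        A (i : Fin n) ((σ i : Fin n)) +
          tropPow A (m + 1) ((σ i : Fin n)) (((σ ^ (m + 2)) i : Fin n)) := by
      show _ ≤ tropMul A (tropPow A (m + 1)) _ _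
      exact Finset.le_sup'
        (f := fun k => A (i : Fin n) k + tropPow A (m + 1) k (((σ ^ (m + 2)) i : Fin n)))
        (Finset.mem_univ ((σ i : Fin n)))
    rw [Finset.sum_range_succ']
    have h2 : ((σ ^ (m + 2)) i : Fin n) = ((σ ^ (m + 1)) (σ i) : Fin n) := by
      rw [hpow i (m + 1)]
    calc ∑ k ∈ Finset.range (m + 1),
            A (((σ ^ (k + 1)) i : Fin n)) (((σ ^ (k + 1 + 1)) i : Fin n)) +
            A (((σ ^ 0) i : Fin n)) (((σ ^ 1) i : Fin n))
        = A (i : Fin n) ((σ i : Fin n)) + ∑ k ∈ Finset.range (m + 1),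
            A (((σ ^ k) (σ i) : Fin n)) (((σ ^ (k + 1)) (σ i) : Fin n)) := by
          rw [add_comm]
          refine congrArg₂ (· + ·) (by simp) (Finset.sum_congr rfl fun k _ => ?_)
          rw [hpow i k, hpow i (k + 1)]
      _ ≤ A (i : Fin n) ((σ i : Fin n)) +
            tropPow A (m + 1) ((σ i : Fin n)) (((σ ^ (m + 1)) (σ i) : Fin n)) := by
          exact add_le_add le_rfl ih
      _ ≤ tropPow A (m + 2) (i : Fin n) (((σ ^ (m + 2)) i : Fin n)) := by
          rw [h2]; exact h1

/-- The per-minor inequality which is the key step of Theorem 3.6: for any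
nonempty index set `S`, `perm((A^{⊙m})|_S) ≥ m · perm(A|_S)`. -/
theorem tropPermOn_tropPow_ge {n : ℕ} [NeZero n] (A : Fin n → Fin n → ℝ)
    (m : ℕ) (hm : 1 ≤ m) (S : Finset (Fin n)) (hS : S.Nonempty) :
    tropPermOn (tropPow A m) S ≥ (m : ℝ) * tropPermOn A S := by
  obtain ⟨σ, -, hσ⟩ := Finset.exists_mem_eq_sup'
    (⟨Equiv.refl {x // x ∈ S}, Finset.mem_univ _⟩ :
      (Finset.univ : Finset (Equiv.Perm {x // x ∈ S})).Nonempty)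
    (fun σ : Equiv.Perm {x // x ∈ S} => ∑ i : {x // x ∈ S}, A (i : Fin n) ((σ i : Fin n)))
  have h1 : tropPermOn (tropPow A m) S ≥
      ∑ i : {x // x ∈ S}, tropPow A m (i : Fin n) (((σ ^ m) i : Fin n)) :=
    Finset.le_sup'
      (f := fun τ : Equiv.Perm {x // x ∈ S} =>
        ∑ i : {x // x ∈ S}, tropPow A m (i : Fin n) ((τ i : Fin n)))
      (Finset.mem_univ (σ ^ m))
  have h2 : ∑ i : {x // x ∈ S}, tropPow A m (i : Fin n) (((σ ^ m) i : Fin n)) ≥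
      ∑ i : {x // x ∈ S}, ∑ k ∈ Finset.range m,
        A (((σ ^ k) i : Fin n)) (((σ ^ (k + 1)) i : Fin n)) :=
    Finset.sum_le_sum fun i _ => tropPow_path_ge A σ m hm i
  have h3 : ∑ i : {x // x ∈ S}, ∑ k ∈ Finset.range m,
      A (((σ ^ k) i : Fin n)) (((σ ^ (k + 1)) i : Fin n)) =
      (m : ℝ) * ∑ i : {x // x ∈ S}, A (i : Fin n) ((σ i : Fin n)) := by
    rw [Finset.sum_comm]
    have : ∀ k ∈ Finset.range m,
        ∑ i : {x // x ∈ S}, A (((σ ^ k) i : Fin n)) (((σ ^ (k + 1)) i : Fin n)) =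
        ∑ i : {x // x ∈ S}, A (i : Fin n) ((σ i : Fin n)) := by
      intro k _
      have := Equiv.sum_comp (σ ^ k)
        (fun j : {x // x ∈ S} => A (j : Fin n) ((σ j : Fin n)))
      rw [← this]
      refine Finset.sum_congr rfl fun i _ => ?_
      congr 1
      rw [pow_succ', Equiv.Perm.mul_apply]
    rw [Finset.sum_congr rfl this, Finset.sum_const, Finset.card_range, nsmul_eq_mul]
  have hA : tropPermOn A S = ∑ i : {x // x ∈ S}, A (i : Fin n) ((σ i : Fin n)) := hσ
  rw [hA]
  linarith [h1, h2, h3.le, h3.ge]
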